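/- Let M ∈ [0, 2), β₀, β₁, β₂ ∈ ℝ with β₁ < 0 and β₂ > 20β₁, and set m₁ = √(2+M), m₂ = √(2−M). Then the vector ξ_g = (m₁⁴/16, m₁³m₂/8, √6·m₁²m₂²/16, m₁m₂³/8, m₂⁴/16) belongs to S_C(M), satisfies τ(ξ_g) = √(4 − M²) and δ(ξ_g) = 0, and minimizes E_U over S_C(M): E_U(ξ_g) ≤ E_U(ξ) for all ξ ∈ S_C(M), with minimum value E_U(ξ_g) = (β₀ + 4β₁)/2. -/

import Mathlib

noncomputable section

/-- τ for complex 5-vectors (ξ₂, ξ₁, ξ₀, ξ₋₁, ξ₋₂). -/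
def tauC (z2 z1 z0 zm1 zm2 : ℂ) : ℂ :=
  2 * ((starRingEnd ℂ) z2 * z1 + (starRingEnd ℂ) zm1 * zm2)
    + (Real.sqrt 6 : ℂ) * ((starRingEnd ℂ) z1 * z0 + (starRingEnd ℂ) z0 * zm1)

/-- δ for complex 5-vectors. -/
def deltaC (z2 z1 z0 zm1 zm2 : ℂ) : ℂ :=
  2 * z2 * zm2 - 2 * z1 * zm1 + z0 ^ 2

/-- F_z for complex 5-vectors. -/
def FzC (z2 z1 z0 zm1 zm2 : ℂ) : ℝ :=
  2 * (‖z2‖ ^ 2 - ‖zm2‖ ^ 2)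
    + ‖z1‖ ^ 2 - ‖zm1‖ ^ 2

/-- Membership in S_C(M): mass and magnetization constraints. -/
def memSC (M : ℝ) (z2 z1 z0 zm1 zm2 : ℂ) : Prop :=
  ‖z2‖ ^ 2 + ‖z1‖ ^ 2 + ‖z0‖ ^ 2
      + ‖zm1‖ ^ 2 + ‖zm2‖ ^ 2 = 1 ∧
  2 * ‖z2‖ ^ 2 + ‖z1‖ ^ 2
      - ‖zm1‖ ^ 2 - 2 * ‖zm2‖ ^ 2 = M

/-- The uniform energy E_U. -/
def EU (b0 b1 b2 M : ℝ) (z2 z1 z0 zm1 zm2 : ℂ) : ℝ :=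
  (1 / 2) * (b1 * ‖tauC z2 z1 z0 zm1 zm2‖ ^ 2
    + (b2 / 5) * ‖deltaC z2 z1 z0 zm1 zm2‖ ^ 2
    + b0 + b1 * M ^ 2)

/-- spin-2 pair channel amplitudes (scaled) -/
def bbP2 (z2 z1 z0 : ℂ) : ℂ := 4*z2*z0 - (Real.sqrt 6 : ℂ)*z1^2
def bbP1 (z2 z1 z0 zm1 : ℂ) : ℂ := 2*(Real.sqrt 6 : ℂ)*z2*zm1 - 2*z1*z0
def bbP0 (z2 z1 z0 zm1 zm2 : ℂ) : ℂ := 4*z2*zm2 + 2*z1*zm1 - 2*z0^2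
def bbM1 (z1 z0 zm1 zm2 : ℂ) : ℂ := 2*(Real.sqrt 6 : ℂ)*z1*zm2 - 2*z0*zm1
def bbM2 (z0 zm1 zm2 : ℂ) : ℂ := 4*z0*zm2 - (Real.sqrt 6 : ℂ)*zm1^2

lemma hs6C : ((Real.sqrt 6 : ℝ) : ℂ)^2 = 6 := by
  rw [← Complex.ofReal_pow, Real.sq_sqrt (by norm_num : (0:ℝ) ≤ 6)]; norm_num

lemma identA (z2 z1 z0 zm1 zm2 : ℂ) :
    2 * FzC z2 z1 z0 zm1 zm2 ^ 2
      + 2 * ‖tauC z2 z1 z0 zm1 zm2‖ ^ 2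
      + 4 * ‖deltaC z2 z1 z0 zm1 zm2‖ ^ 2
      + (‖bbP2 z2 z1 z0‖ ^ 2 + ‖bbP1 z2 z1 z0 zm1‖ ^ 2
        + ‖bbP0 z2 z1 z0 zm1 zm2‖ ^ 2 + ‖bbM1 z1 z0 zm1 zm2‖ ^ 2
        + ‖bbM2 z0 zm1 zm2‖ ^ 2)
    = 8 * (‖z2‖ ^ 2 + ‖z1‖ ^ 2 + ‖z0‖ ^ 2
        + ‖zm1‖ ^ 2 + ‖zm2‖ ^ 2) ^ 2 := by
  have hs := hs6C
  simp only [FzC, tauC, deltaC, bbP2, bbP1, bbP0, bbM1, bbM2, Complex.sq_norm]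
  rw [← Complex.ofReal_inj]
  push_cast [← Complex.mul_conj]
  simp only [map_add, map_sub, map_mul, map_pow, map_ofNat, Complex.conj_ofReal, Complex.conj_conj]
  linear_combination (2*(starRingEnd ℂ) z0*(starRingEnd ℂ) z1*z0*z1
    + 2*(starRingEnd ℂ) z0*(starRingEnd ℂ) zm1*z0*zm1
    + 2*((starRingEnd ℂ) z0)^2*z1*zm1 + 2*(starRingEnd ℂ) z1*(starRingEnd ℂ) zm1*z0^2
    + 4*(starRingEnd ℂ) z1*(starRingEnd ℂ) zm2*z1*zm2 + ((starRingEnd ℂ) z1)^2*z1^2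
    + 4*(starRingEnd ℂ) z2*(starRingEnd ℂ) zm1*z2*zm1 + ((starRingEnd ℂ) zm1)^2*zm1^2) * hs

lemma identB (z2 z1 z0 zm1 zm2 : ℂ) :
    2 * bbP2 z2 z1 z0 * bbM2 z0 zm1 zm2 - 2 * bbP1 z2 z1 z0 zm1 * bbM1 z1 z0 zm1 zm2
      + bbP0 z2 z1 z0 zm1 zm2 ^ 2 = 4 * deltaC z2 z1 z0 zm1 zm2 ^ 2 := by
  have hs := hs6C
  simp only [bbP2, bbP1, bbP0, bbM1, bbM2, deltaC]
  linear_combination (-8*z1*z2*zm1*zm2 + 2*z1^2*zm1^2) * hs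

lemma key_ineq (z2 z1 z0 zm1 zm2 : ℂ) :
    FzC z2 z1 z0 zm1 zm2 ^ 2 + ‖tauC z2 z1 z0 zm1 zm2‖ ^ 2
      + 4 * ‖deltaC z2 z1 z0 zm1 zm2‖ ^ 2
    ≤ 4 * (‖z2‖ ^ 2 + ‖z1‖ ^ 2 + ‖z0‖ ^ 2
        + ‖zm1‖ ^ 2 + ‖zm2‖ ^ 2) ^ 2 := by
  have hA := identA z2 z1 z0 zm1 zm2
  have hB := identB z2 z1 z0 zm1 zm2
  set X := bbP2 z2 z1 z0
  set Y := bbP1 z2 z1 z0 zm1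
  set Z := bbP0 z2 z1 z0 zm1 zm2
  set W := bbM1 z1 z0 zm1 zm2
  set V := bbM2 z0 zm1 zm2
  have h4 : 4 * ‖deltaC z2 z1 z0 zm1 zm2‖ ^ 2
      = ‖2*X*V - 2*Y*W + Z^2‖ := by
    rw [hB, norm_mul, norm_pow]
    norm_num
  have t2 : ‖2*X*V - 2*Y*W‖ ≤ ‖2*X*V‖ + ‖2*Y*W‖ := by
    simpa [sub_eq_add_neg] using norm_add_le (2*X*V) (-(2*Y*W))
  have t1 : ‖2*X*V - 2*Y*W + Z^2‖
      ≤ ‖2*X*V‖ + ‖2*Y*W‖ + ‖Z^2‖ := by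
    calc ‖2*X*V - 2*Y*W + Z^2‖
        ≤ ‖2*X*V - 2*Y*W‖ + ‖Z^2‖ := norm_add_le _ _
      _ ≤ _ := by linarith
  have e1 : ‖2*X*V‖ = 2 * ‖X‖ * ‖V‖ := by
    rw [norm_mul, norm_mul]; norm_num
  have e2 : ‖2*Y*W‖ = 2 * ‖Y‖ * ‖W‖ := by
    rw [norm_mul, norm_mul]; norm_num
  have e3 : ‖Z^2‖ = ‖Z‖ ^ 2 := norm_pow _ _
  have hbd : 4 * ‖deltaC z2 z1 z0 zm1 zm2‖ ^ 2
      ≤ ‖X‖ ^ 2 + ‖Y‖ ^ 2 + ‖Z‖ ^ 2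
        + ‖W‖ ^ 2 + ‖V‖ ^ 2 := by
    rw [h4]
    nlinarith [t1, e1, e2, e3, sq_nonneg (‖X‖ - ‖V‖),
      sq_nonneg (‖Y‖ - ‖W‖)]
  linarith



theorem stmt8 (M b0 b1 b2 : ℝ) (hM0 : 0 ≤ M) (hM2 : M < 2)
    (hb1 : b1 < 0) (hb2 : b2 > 20 * b1)
    (m1 m2 : ℝ) (hm1 : m1 = Real.sqrt (2 + M)) (hm2 : m2 = Real.sqrt (2 - M)) :
    memSC M ((m1 ^ 4 / 16 : ℝ) : ℂ) ((m1 ^ 3 * m2 / 8 : ℝ) : ℂ)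
        ((Real.sqrt 6 * m1 ^ 2 * m2 ^ 2 / 16 : ℝ) : ℂ)
        ((m1 * m2 ^ 3 / 8 : ℝ) : ℂ) ((m2 ^ 4 / 16 : ℝ) : ℂ) ∧
    tauC ((m1 ^ 4 / 16 : ℝ) : ℂ) ((m1 ^ 3 * m2 / 8 : ℝ) : ℂ)
        ((Real.sqrt 6 * m1 ^ 2 * m2 ^ 2 / 16 : ℝ) : ℂ)
        ((m1 * m2 ^ 3 / 8 : ℝ) : ℂ) ((m2 ^ 4 / 16 : ℝ) : ℂ)
      = (Real.sqrt (4 - M ^ 2) : ℂ) ∧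
    deltaC ((m1 ^ 4 / 16 : ℝ) : ℂ) ((m1 ^ 3 * m2 / 8 : ℝ) : ℂ)
        ((Real.sqrt 6 * m1 ^ 2 * m2 ^ 2 / 16 : ℝ) : ℂ)
        ((m1 * m2 ^ 3 / 8 : ℝ) : ℂ) ((m2 ^ 4 / 16 : ℝ) : ℂ) = 0 ∧
    (∀ z2 z1 z0 zm1 zm2 : ℂ, memSC M z2 z1 z0 zm1 zm2 →
      EU b0 b1 b2 M ((m1 ^ 4 / 16 : ℝ) : ℂ) ((m1 ^ 3 * m2 / 8 : ℝ) : ℂ)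
          ((Real.sqrt 6 * m1 ^ 2 * m2 ^ 2 / 16 : ℝ) : ℂ)
          ((m1 * m2 ^ 3 / 8 : ℝ) : ℂ) ((m2 ^ 4 / 16 : ℝ) : ℂ)
        ≤ EU b0 b1 b2 M z2 z1 z0 zm1 zm2) ∧
    EU b0 b1 b2 M ((m1 ^ 4 / 16 : ℝ) : ℂ) ((m1 ^ 3 * m2 / 8 : ℝ) : ℂ)
        ((Real.sqrt 6 * m1 ^ 2 * m2 ^ 2 / 16 : ℝ) : ℂ)
        ((m1 * m2 ^ 3 / 8 : ℝ) : ℂ) ((m2 ^ 4 / 16 : ℝ) : ℂ)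
      = (b0 + 4 * b1) / 2 := by
  have ha : m1 ^ 2 = 2 + M := by rw [hm1]; exact Real.sq_sqrt (by linarith)
  have hb : m2 ^ 2 = 2 - M := by rw [hm2]; exact Real.sq_sqrt (by linarith)
  have hs6 : Real.sqrt 6 ^ 2 = 6 := Real.sq_sqrt (by norm_num)
  have ht : Real.sqrt (4 - M ^ 2) = m1 * m2 := by
    rw [hm1, hm2, ← Real.sqrt_mul (by linarith : (0:ℝ) ≤ 2 + M)]
    congr 1; ring
  have hmem : memSC M ((m1 ^ 4 / 16 : ℝ) : ℂ) ((m1 ^ 3 * m2 / 8 : ℝ) : ℂ)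
      ((Real.sqrt 6 * m1 ^ 2 * m2 ^ 2 / 16 : ℝ) : ℂ)
      ((m1 * m2 ^ 3 / 8 : ℝ) : ℂ) ((m2 ^ 4 / 16 : ℝ) : ℂ) := by
    constructor
    · simp only [Complex.sq_norm, Complex.normSq_ofReal]
      linear_combination ((1/32) + (3/64)*M + (1/64)*M*m1^2 + (1/64)*M*m1^2*m2^2
          + (1/256)*M*m1^4 + (1/16)*M*m2^2 + (3/128)*M*m2^4 + (3/128)*M^2
          + (1/256)*M^2*m1^2 + (1/64)*M^2*m2^2 + (1/256)*M^3 + (1/64)*m1^2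
          + (1/32)*m1^2*m2^2 + (3/128)*m1^2*m2^4 + (1/128)*m1^4 + (1/64)*m1^4*m2^2
          + (1/256)*m1^6 + (1/16)*m2^2 + (3/64)*m2^4 + (1/64)*m2^6) * ha
        + ((15/32) + (11/64)*M + (5/64)*M*m2^2 + (3/256)*M*m2^4 + (5/128)*M^2
          + (3/256)*M^2*m2^2 + (1/256)*M^3 + (11/64)*m2^2 + (5/128)*m2^4
          + (1/256)*m2^6) * hb
        + ((1/256)*m1^4*m2^4) * hs6
    · simp only [Complex.sq_norm, Complex.normSq_ofReal]
      linear_combination ((1/16) + (3/32)*M + (1/32)*M*m1^2 + (1/64)*M*m1^2*m2^2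
          + (1/128)*M*m1^4 + (1/16)*M*m2^2 + (3/64)*M^2 + (1/128)*M^2*m1^2
          + (1/64)*M^2*m2^2 + (1/128)*M^3 + (1/32)*m1^2 + (1/32)*m1^2*m2^2
          + (1/64)*m1^4 + (1/64)*m1^4*m2^2 + (1/128)*m1^6 + (1/16)*m2^2
          + (-1/64)*m2^6) * ha
        + ((-1/16) + (11/32)*M + (1/32)*M*m2^2 + (-1/128)*M*m2^4 + (5/64)*M^2
          + (1/128)*M^2*m2^2 + (1/128)*M^3 + (-3/32)*m2^2 + (-3/64)*m2^4
          + (-1/128)*m2^6) * hb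
  have htau : tauC ((m1 ^ 4 / 16 : ℝ) : ℂ) ((m1 ^ 3 * m2 / 8 : ℝ) : ℂ)
      ((Real.sqrt 6 * m1 ^ 2 * m2 ^ 2 / 16 : ℝ) : ℂ)
      ((m1 * m2 ^ 3 / 8 : ℝ) : ℂ) ((m2 ^ 4 / 16 : ℝ) : ℂ)
      = (Real.sqrt (4 - M ^ 2) : ℂ) := by
    rw [ht]
    simp only [tauC, Complex.conj_ofReal]
    norm_cast
    linear_combination ((1/16)*M*m1*m2 + (3/64)*M*m1*m2^3 + (1/64)*M*m1^3*m2
        + (1/64)*M^2*m1*m2 + (1/16)*m1*m2 + (3/32)*m1*m2^3 + (3/64)*m1*m2^5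
        + (1/32)*m1^3*m2 + (3/64)*m1^3*m2^3 + (1/64)*m1^5*m2) * ha
      + ((1/8)*M*m1*m2 + (1/32)*M*m1*m2^3 + (1/64)*M^2*m1*m2 + (7/16)*m1*m2
        + (1/8)*m1*m2^3 + (1/64)*m1*m2^5) * hb
      + ((1/128)*m1^3*m2^5 + (1/128)*m1^5*m2^3) * hs6
  have hdel : deltaC ((m1 ^ 4 / 16 : ℝ) : ℂ) ((m1 ^ 3 * m2 / 8 : ℝ) : ℂ)
      ((Real.sqrt 6 * m1 ^ 2 * m2 ^ 2 / 16 : ℝ) : ℂ)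
      ((m1 * m2 ^ 3 / 8 : ℝ) : ℂ) ((m2 ^ 4 / 16 : ℝ) : ℂ) = 0 := by
    simp only [deltaC]
    norm_cast
    linear_combination (m1^4*m2^4/256) * hs6
  have habsτ : ‖tauC ((m1 ^ 4 / 16 : ℝ) : ℂ) ((m1 ^ 3 * m2 / 8 : ℝ) : ℂ)
      ((Real.sqrt 6 * m1 ^ 2 * m2 ^ 2 / 16 : ℝ) : ℂ)
      ((m1 * m2 ^ 3 / 8 : ℝ) : ℂ) ((m2 ^ 4 / 16 : ℝ) : ℂ)‖ ^ 2 = 4 - M ^ 2 := by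
    rw [htau, Complex.sq_norm, Complex.normSq_ofReal, ← sq]
    exact Real.sq_sqrt (by nlinarith)
  have hval : EU b0 b1 b2 M ((m1 ^ 4 / 16 : ℝ) : ℂ) ((m1 ^ 3 * m2 / 8 : ℝ) : ℂ)
      ((Real.sqrt 6 * m1 ^ 2 * m2 ^ 2 / 16 : ℝ) : ℂ)
      ((m1 * m2 ^ 3 / 8 : ℝ) : ℂ) ((m2 ^ 4 / 16 : ℝ) : ℂ) = (b0 + 4 * b1) / 2 := by
    rw [EU, habsτ, hdel]
    simp
    ring
  refine ⟨hmem, htau, hdel, ?_, hval⟩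
  intro z2 z1 z0 zm1 zm2 hz
  obtain ⟨hn, hFz⟩ := hz
  have hkey := key_ineq z2 z1 z0 zm1 zm2
  rw [hn] at hkey
  have hF : FzC z2 z1 z0 zm1 zm2 = M := by simp only [FzC]; linarith
  rw [hF] at hkey
  rw [hval, EU]
  have hD : 0 ≤ ‖deltaC z2 z1 z0 zm1 zm2‖ ^ 2 := sq_nonneg _
  have h1 : 0 ≤ (-b1) * (4 * 1 ^ 2 - (M ^ 2 + ‖tauC z2 z1 z0 zm1 zm2‖ ^ 2
      + 4 * ‖deltaC z2 z1 z0 zm1 zm2‖ ^ 2)) :=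
    mul_nonneg (by linarith) (by linarith)
  have h2 : 0 ≤ (b2/5 - 4*b1) * ‖deltaC z2 z1 z0 zm1 zm2‖ ^ 2 :=
    mul_nonneg (by linarith) hD
  nlinarith [h1, h2]
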